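/- Let G be a directed graph in which every vertex except the source s has out-degree at most 2, with the farthest min-cut sequence C₁, C₂, …, C_{k+1} defined by S₁={s}, C_i = FMC(S_i,t,G), S_{i+1} = (A_i ∪ out(A_i,G))∖{t}. Then |C_{i+1}| ≤ 2|C_i| for each i, and hence if maxflow(s,t,G) = f (so |C₁| = f), the final cut satisfies |C_{k+1}| ≤ 2^k·f. -/

import Mathlib

open Finset

/-- `p` is a nonempty directed path/walk (as a list of edges) from `s` to `t`
using only edges of `G`. -/
def IsPath {V : Type*} (G : Finset (V × V)) (s t : V) (p : List (V × V)) : Prop :=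
  p ≠ [] ∧ (∀ e ∈ p, e ∈ G) ∧ List.Chain' (fun e f => e.2 = f.1) p ∧
    p.head?.map Prod.fst = some s ∧ p.getLast?.map Prod.snd = some t

/-- `G` contains `r` pairwise edge-disjoint paths from `s` to `t` (unit capacities). -/
def EDP {V : Type*} (G : Finset (V × V)) (s t : V) (r : ℕ) : Prop :=
  ∃ ps : Fin r → List (V × V), (∀ i, IsPath G s t (ps i)) ∧
    ∀ i j, i ≠ j → ∀ e, e ∈ ps i → e ∉ ps j

/-- Max-flow with unit capacities: the maximum number of edge-disjoint `s`-`t` paths. -/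
noncomputable def maxFlow {V : Type*} (G : Finset (V × V)) (s t : V) : ℕ :=
  sSup {r | EDP G s t r}

/-- Directed reachability in the edge set `G`. -/
def Reach {V : Type*} (G : Finset (V × V)) (s t : V) : Prop :=
  Relation.ReflTransGen (fun a b => (a, b) ∈ G) s t

def inEdges {V : Type*} [DecidableEq V] (G : Finset (V × V)) (v : V) : Finset (V × V) :=
  G.filter fun e => e.2 = v

def outDeg {V : Type*} [DecidableEq V] (G : Finset (V × V)) (v : V) : ℕ :=
  (G.filter fun e => e.1 = v).card

/-- `H` is a `(lam, k)` fault-tolerant bounded-flow-preserver of `G` w.r.t. source `s`: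
for every set `F` of at most `k` failed edges and every vertex `t`, the `s`-`t` max-flow
of `H \ F` equals that of `G \ F` whenever the latter is at most `lam`, and is at least
`lam` otherwise. -/
def IsFTBFP {V : Type*} [DecidableEq V] (G H : Finset (V × V)) (s : V) (lam k : ℕ) : Prop :=
  H ⊆ G ∧ ∀ F : Finset (V × V), F.card ≤ k → ∀ t : V,
    (maxFlow (G \ F) s t ≤ lam → maxFlow (H \ F) s t = maxFlow (G \ F) s t) ∧
    (lam < maxFlow (G \ F) s t → lam ≤ maxFlow (H \ F) s t)

/-- `H` is a `j`-fault-tolerant reachability subgraph of `G` w.r.t. source `s`. -/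
def IsFTRS {V : Type*} [DecidableEq V] (G H : Finset (V × V)) (s : V) (j : ℕ) : Prop :=
  H ⊆ G ∧ ∀ F : Finset (V × V), F.card ≤ j → ∀ t : V,
    (Reach (H \ F) s t ↔ Reach (G \ F) s t)

def IsCut {V : Type*} (A : Finset V) (s t : V) : Prop := s ∈ A ∧ t ∉ A

/-- Number of edges of `G` from `A` to its complement. -/
def cutVal {V : Type*} [DecidableEq V] (G : Finset (V × V)) (A : Finset V) : ℕ :=
  (G.filter fun e => e.1 ∈ A ∧ e.2 ∉ A).card

def IsMinCut {V : Type*} [DecidableEq V] (G : Finset (V × V)) (s t : V) (A : Finset V) : Prop :=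
  IsCut A s t ∧ ∀ B : Finset V, IsCut B s t → cutVal G A ≤ cutVal G B

def IsCutS {V : Type*} (S : Finset V) (t : V) (A : Finset V) : Prop := S ⊆ A ∧ t ∉ A

def IsMinCutS {V : Type*} [DecidableEq V] (G : Finset (V × V)) (S : Finset V) (t : V)
    (A : Finset V) : Prop :=
  IsCutS S t A ∧ ∀ B : Finset V, IsCutS S t B → cutVal G A ≤ cutVal G B

/-- Farthest min-cut: the min-cut whose source side contains the source side of
every min-cut. -/
def IsFMC {V : Type*} [DecidableEq V] (G : Finset (V × V)) (S : Finset V) (t : V)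
    (A : Finset V) : Prop :=
  IsMinCutS G S t A ∧ ∀ B : Finset V, IsMinCutS G S t B → B ⊆ A

/-- Vertices outside `A` with an in-edge from `A`. -/
def outSet {V : Type*} [DecidableEq V] (G : Finset (V × V)) (A : Finset V) : Finset V :=
  (G.filter fun e => e.1 ∈ A ∧ e.2 ∉ A).image Prod.snd


namespace S15
variable {V : Type*} [DecidableEq V]

def ex (F : Finset (V × V)) (v : V) : ℤ :=
  ((F.filter fun e => e.1 = v).card : ℤ) - ((F.filter fun e => e.2 = v).card : ℤ)

lemma card_filter_insert {α : Type*} [DecidableEq α] (p : α → Prop) [DecidablePred p]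
    {e : α} {F : Finset α} (he : e ∉ F) :
    ((insert e F).filter p).card = (F.filter p).card + if p e then 1 else 0 := by
  rw [Finset.filter_insert]
  split
  · rw [Finset.card_insert_of_notMem (fun h => he (Finset.mem_of_mem_filter e h))]
  · simp

lemma card_filter_erase {α : Type*} [DecidableEq α] (p : α → Prop) [DecidablePred p]
    {e : α} {F : Finset α} (he : e ∈ F) :
    (F.filter p).card = ((F.erase e).filter p).card + if p e then 1 else 0 := by
  have h2 : insert e (F.erase e) = F := Finset.insert_erase he
  rw [← h2, card_filter_insert p (Finset.notMem_erase e F), Finset.insert_erase he]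

lemma ex_insert {e : V × V} {F : Finset (V × V)} (he : e ∉ F) (v : V) :
    ex (insert e F) v = ex F v + (if e.1 = v then 1 else 0) - (if e.2 = v then 1 else 0) := by
  unfold ex
  rw [card_filter_insert _ he, card_filter_insert _ he]
  push_cast
  split <;> split <;> ring

lemma ex_erase {e : V × V} {F : Finset (V × V)} (he : e ∈ F) (v : V) :
    ex (F.erase e) v = ex F v - (if e.1 = v then 1 else 0) + (if e.2 = v then 1 else 0) := by
  unfold ex
  rw [card_filter_erase (fun x => x.1 = v) he, card_filter_erase (fun x => x.2 = v) he]
  push_cast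
  split <;> split <;> ring

lemma card_filter_mem_fst (F : Finset (V × V)) (R : Finset V) :
    (F.filter fun e => e.1 ∈ R).card = ∑ v ∈ R, (F.filter fun e => e.1 = v).card := by
  rw [Finset.card_eq_sum_card_fiberwise (f := Prod.fst) (s := F.filter fun e => e.1 ∈ R) (t := R)
    (fun e he => (Finset.mem_filter.1 he).2)]
  refine Finset.sum_congr rfl fun v hv => ?_
  congr 1
  ext e
  simp only [Finset.mem_filter]
  constructor
  · rintro ⟨⟨h1, _⟩, h3⟩; exact ⟨h1, h3⟩
  · rintro ⟨h1, h3⟩; exact ⟨⟨h1, h3 ▸ hv⟩, h3⟩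

lemma card_filter_mem_snd (F : Finset (V × V)) (R : Finset V) :
    (F.filter fun e => e.2 ∈ R).card = ∑ v ∈ R, (F.filter fun e => e.2 = v).card := by
  rw [Finset.card_eq_sum_card_fiberwise (f := Prod.snd) (s := F.filter fun e => e.2 ∈ R) (t := R)
    (fun e he => (Finset.mem_filter.1 he).2)]
  refine Finset.sum_congr rfl fun v hv => ?_
  congr 1
  ext e
  simp only [Finset.mem_filter]
  constructor
  · rintro ⟨⟨h1, _⟩, h3⟩; exact ⟨h1, h3⟩
  · rintro ⟨h1, h3⟩; exact ⟨⟨h1, h3 ▸ hv⟩, h3⟩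

lemma flow_cut {F : Finset (V × V)} {R : Finset V} {s : V} (hs : s ∈ R)
    (hcons : ∀ v ∈ R, v ≠ s → ex F v = 0) :
    ((F.filter fun e => e.1 ∈ R ∧ e.2 ∉ R).card : ℤ)
      - ((F.filter fun e => e.1 ∉ R ∧ e.2 ∈ R).card : ℤ) = ex F s := by
  have h1 : ∑ v ∈ R, ex F v = ex F s :=
    Finset.sum_eq_single_of_mem s hs (fun v hv hne => hcons v hv hne)
  have h2 : ∑ v ∈ R, ex F v
      = ((F.filter fun e => e.1 ∈ R).card : ℤ) - ((F.filter fun e => e.2 ∈ R).card : ℤ) := by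
    rw [card_filter_mem_fst F R, card_filter_mem_snd F R]
    push_cast
    rw [← Finset.sum_sub_distrib]
    rfl
  have h3 : ((F.filter fun e => e.1 ∈ R).filter fun e => e.2 ∈ R).card
      + ((F.filter fun e => e.1 ∈ R).filter fun e => ¬ e.2 ∈ R).card
      = (F.filter fun e => e.1 ∈ R).card :=
    Finset.card_filter_add_card_filter_not _
  have h4 : ((F.filter fun e => e.2 ∈ R).filter fun e => e.1 ∈ R).card
      + ((F.filter fun e => e.2 ∈ R).filter fun e => ¬ e.1 ∈ R).card
      = (F.filter fun e => e.2 ∈ R).card :=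
    Finset.card_filter_add_card_filter_not _
  rw [Finset.filter_filter, Finset.filter_filter] at h3 h4
  have h5 : (F.filter fun e => e.1 ∈ R ∧ e.2 ∈ R) = (F.filter fun e => e.2 ∈ R ∧ e.1 ∈ R) := by
    apply Finset.filter_congr; intro e _; exact ⟨fun h => ⟨h.2, h.1⟩, fun h => ⟨h.2, h.1⟩⟩
  have h6 : (F.filter fun e => e.1 ∈ R ∧ e.2 ∉ R) = (F.filter fun e => e.1 ∈ R ∧ ¬ e.2 ∈ R) := rfl
  have h7 : (F.filter fun e => e.1 ∉ R ∧ e.2 ∈ R) = (F.filter fun e => e.2 ∈ R ∧ ¬ e.1 ∈ R) := by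
    apply Finset.filter_congr; intro e _; exact ⟨fun h => ⟨h.2, h.1⟩, fun h => ⟨h.2, h.1⟩⟩
  rw [h6, h7, ← h1, h2]
  rw [h5] at h3
  omega

lemma extract (G : Finset (V × V)) (t : V) :
    ∀ n (F : Finset (V × V)), F.card ≤ n → F ⊆ G → ∀ w, w ≠ t →
    (∀ v, v ≠ t → 0 ≤ ex F v) → 1 ≤ ex F w →
    ∃ (p : List (V × V)) (F'' : Finset (V × V)),
      p ≠ [] ∧ (∀ e ∈ p, e ∈ F) ∧ List.Chain' (fun e f => e.2 = f.1) p ∧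
      p.head?.map Prod.fst = some w ∧ p.getLast?.map Prod.snd = some t ∧
      F'' ⊆ F ∧ (∀ e ∈ p, e ∉ F'') ∧
      (∀ v, v ≠ w → v ≠ t → ex F'' v = ex F v) ∧ ex F'' w = ex F w - 1 := by
  intro n
  induction n with
  | zero =>
    intro F hc hFG w hwt hnn hw
    exfalso
    have : F = ∅ := Finset.card_eq_zero.1 (Nat.le_zero.1 hc)
    subst this
    simp [ex] at hw
  | succ n ih =>
    intro F hc hFG w hwt hnn hw
    have ho : 1 ≤ (F.filter fun e => e.1 = w).card := by
      by_contra h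
      have h0 : (F.filter fun e => e.1 = w).card = 0 := by omega
      unfold ex at hw
      rw [h0] at hw
      have : (0 : ℤ) ≤ ((F.filter fun e => e.2 = w).card : ℤ) := by positivity
      omega
    obtain ⟨e, he⟩ := Finset.card_pos.1 ho
    rw [Finset.mem_filter] at he
    obtain ⟨heF, he1⟩ := he
    have hcard : (F.erase e).card ≤ n := by
      have := Finset.card_erase_of_mem heF
      omega
    have hex : ∀ v, ex (F.erase e) v
        = ex F v - (if w = v then 1 else 0) + (if e.2 = v then 1 else 0) := by
      intro v
      rw [ex_erase heF v, he1]
    by_cases h2t : e.2 = t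
    · -- direct edge to t
      refine ⟨[e], F.erase e, by simp, by simp [heF], List.isChain_singleton e, ?_, ?_, 
        Finset.erase_subset e F, ?_, ?_, ?_⟩
      · simp [he1]
      · simp [h2t]
      · intro e' he'
        simp at he'
        exact he' ▸ Finset.notMem_erase e F
      · intro v hvw hvt
        rw [hex v, h2t]
        simp [Ne.symm hvw, Ne.symm hvt]
      · rw [hex w, h2t]
        simp [Ne.symm hwt]
    · by_cases h2w : e.2 = w
      · -- self loop at w
        have hex' : ∀ v, ex (F.erase e) v = ex F v := by
          intro v; rw [hex v, h2w]; ring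
        obtain ⟨p, F'', hpne, hpF, hch, hhd, hlst, hsub, hdisj, hex1, hex2⟩ :=
          ih (F.erase e) hcard ((Finset.erase_subset e F).trans hFG) w hwt
            (fun v hv => (hex' v) ▸ hnn v hv) ((hex' w) ▸ hw)
        exact ⟨p, F'', hpne, fun e' he' => (Finset.erase_subset e F) (hpF e' he'), hch, hhd, hlst,
          hsub.trans (Finset.erase_subset e F), hdisj,
          fun v hvw hvt => (hex1 v hvw hvt).trans (hex' v),
          hex2.trans (by rw [hex' w])⟩
      · -- advance to v := e.2
        have hexw : ex (F.erase e) w = ex F w - 1 := by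
          rw [hex w]; simp [h2w]
        have hw2' : ¬ (w = e.2) := fun h => h2w h.symm
        have hexv : ex (F.erase e) e.2 = ex F e.2 + 1 := by
          rw [hex e.2]; simp [hw2']
        have hexo : ∀ v, v ≠ w → v ≠ e.2 → ex (F.erase e) v = ex F v := by
          intro v hvw hv2
          rw [hex v]
          simp [Ne.symm hvw, Ne.symm hv2]
        have hnn' : ∀ v, v ≠ t → 0 ≤ ex (F.erase e) v := by
          intro v hvt
          by_cases hvw : v = w
          · subst hvw; rw [hexw]; omega
          · by_cases hv2 : v = e.2
            · subst hv2; rw [hexv]; have := hnn e.2 h2t; omega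
            · rw [hexo v hvw hv2]; exact hnn v hvt
        obtain ⟨p', F'', hpne, hpF, hch, hhd, hlst, hsub, hdisj, hex1, hex2⟩ :=
          ih (F.erase e) hcard ((Finset.erase_subset e F).trans hFG) e.2 h2t hnn'
            (by rw [hexv]; have := hnn e.2 h2t; omega)
        obtain ⟨h', rest, rfl⟩ := List.exists_cons_of_ne_nil hpne
        have hh1 : h'.1 = e.2 := by
          simp only [List.head?_cons, Option.map_some] at hhd
          exact Option.some.inj hhd
        refine ⟨e :: h' :: rest, F'', by simp, ?_, ?_, by simp [he1], ?_, 
          hsub.trans (Finset.erase_subset e F), ?_, ?_, ?_⟩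
        · intro e' he'
          rcases List.mem_cons.1 he' with h | h
          · exact h ▸ heF
          · exact (Finset.erase_subset e F) (hpF e' h)
        · exact hch.cons_cons hh1.symm
        · rw [List.getLast?_cons_cons]
          exact hlst
        · intro e' he'
          rcases List.mem_cons.1 he' with h | h
          · subst h
            exact fun hc => (Finset.notMem_erase e' F) (hsub hc)
          · exact hdisj e' h
        · intro v hvw hvt
          by_cases hv2 : v = e.2
          · subst hv2
            rw [hex2, hexv]; ring
          · rw [hex1 v hv2 hvt, hexo v hvw hv2]
        · have hw2 : w ≠ e.2 := fun h => h2w h.symm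
          rw [hex1 w hw2 hwt, hexw]

lemma ex_insert' {a b : V} {F : Finset (V × V)} (he : (a, b) ∉ F) (v : V) :
    ex (insert (a, b) F) v = ex F v + (if a = v then 1 else 0) - (if b = v then 1 else 0) :=
  ex_insert he v

lemma ex_erase' {a b : V} {F : Finset (V × V)} (he : (a, b) ∈ F) (v : V) :
    ex (F.erase (a, b)) v = ex F v - (if a = v then 1 else 0) + (if b = v then 1 else 0) :=
  ex_erase he v

lemma exists_nodup_chain {step : V → V → Prop} {s t : V} (h : Relation.ReflTransGen step s t) :
    ∃ c : List V, c ≠ [] ∧ c.Chain' step ∧ c.head? = some s ∧ c.getLast? = some t ∧ c.Nodup := by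
  induction h using Relation.ReflTransGen.head_induction_on with
  | refl => exact ⟨[t], by simp, List.isChain_singleton t, rfl, rfl, by simp⟩
  | @head a b hab hbt ih =>
    obtain ⟨c, hcne, hch, hhd, hlst, hnd⟩ := ih
    by_cases hac : a ∈ c
    · obtain ⟨c1, c2, rfl⟩ := List.append_of_mem hac
      refine ⟨a :: c2, by simp, (List.isChain_append.1 hch).2.1, rfl, ?_, hnd.of_append_right⟩
      rw [← hlst, List.getLast?_append_of_ne_nil c1 (by simp)]
    · obtain ⟨b', c', rfl⟩ := List.exists_cons_of_ne_nil hcne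
      have hb : b' = b := by simpa using hhd
      subst hb
      exact ⟨a :: b' :: c', by simp, List.isChain_cons_cons.2 ⟨hab, hch⟩, rfl,
        by rw [List.getLast?_cons_cons]; exact hlst, List.nodup_cons.2 ⟨hac, hnd⟩⟩

lemma aug (G F : Finset (V × V)) (t : V) :
    ∀ (c : List V) (u : V) (Ft : Finset (V × V)), Ft ⊆ G →
    List.Chain' (fun a b => ((a, b) ∈ G ∧ (a, b) ∉ F) ∨ (b, a) ∈ F) (u :: c) →
    (u :: c).Nodup → (u :: c).getLast? = some t →
    (∀ x y, x ∈ u :: c → y ∈ u :: c → ((x, y) ∈ Ft ↔ (x, y) ∈ F)) →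
    ∃ F', F' ⊆ G ∧
      ∀ v, ex F' v = ex Ft v + (if u = v then 1 else 0) - (if t = v then 1 else 0) := by
  intro c
  induction c with
  | nil =>
    intro u Ft hFtG _ _ hlst _
    have hut : u = t := by simpa using hlst
    subst hut
    exact ⟨Ft, hFtG, fun v => by ring⟩
  | cons h c' ih =>
    intro u Ft hFtG hch hnd hlst hagree
    have hstep := (List.isChain_cons_cons.1 hch).1
    have hch' := (List.isChain_cons_cons.1 hch).2
    have hmu : u ∉ h :: c' := (List.nodup_cons.1 hnd).1
    have hnd' : (h :: c').Nodup := (List.nodup_cons.1 hnd).2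
    have hlst' : (h :: c').getLast? = some t := by
      rw [List.getLast?_cons_cons] at hlst; exact hlst
    rcases hstep with ⟨hG, hnF⟩ | hF
    · have hnFt : (u, h) ∉ Ft := fun hc => hnF ((hagree u h (by simp) (by simp)).1 hc)
      have hsub : insert (u, h) Ft ⊆ G := Finset.insert_subset hG hFtG
      have hagree' : ∀ x y, x ∈ h :: c' → y ∈ h :: c' →
          ((x, y) ∈ insert (u, h) Ft ↔ (x, y) ∈ F) := by
        intro x y hx hy
        rw [Finset.mem_insert]
        constructor
        · rintro (hxy | hxy)
          · have hxu : x = u := (Prod.ext_iff.1 hxy).1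
            exact absurd (hxu ▸ hx) hmu
          · exact (hagree x y (List.mem_cons_of_mem u hx) (List.mem_cons_of_mem u hy)).1 hxy
        · intro hxy
          exact Or.inr ((hagree x y (List.mem_cons_of_mem u hx) (List.mem_cons_of_mem u hy)).2 hxy)
      obtain ⟨F', hF'G, hex'⟩ := ih h (insert (u, h) Ft) hsub hch' hnd' hlst' hagree'
      refine ⟨F', hF'G, fun v => ?_⟩
      rw [hex' v, ex_insert' hnFt v]
      ring
    · have hFt : (h, u) ∈ Ft := (hagree h u (by simp) (by simp)).2 hF
      have hsub : Ft.erase (h, u) ⊆ G := (Finset.erase_subset _ _).trans hFtG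
      have hagree' : ∀ x y, x ∈ h :: c' → y ∈ h :: c' →
          ((x, y) ∈ Ft.erase (h, u) ↔ (x, y) ∈ F) := by
        intro x y hx hy
        rw [Finset.mem_erase]
        constructor
        · rintro ⟨_, hxy⟩
          exact (hagree x y (List.mem_cons_of_mem u hx) (List.mem_cons_of_mem u hy)).1 hxy
        · intro hxy
          have hyy : ∀ hc : (x, y) = (h, u), y = u := fun hc => (Prod.ext_iff.1 hc).2
          refine ⟨fun hc => hmu (hyy hc ▸ hy), 
            (hagree x y (List.mem_cons_of_mem u hx) (List.mem_cons_of_mem u hy)).2 hxy⟩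
      obtain ⟨F', hF'G, hex'⟩ := ih h (Ft.erase (h, u)) hsub hch' hnd' hlst' hagree'
      refine ⟨F', hF'G, fun v => ?_⟩
      rw [hex' v, ex_erase' hFt v]
      ring

lemma edp_of_flow (G : Finset (V × V)) (s t : V) (hst : s ≠ t) :
    ∀ (r : ℕ) (F : Finset (V × V)), F ⊆ G → (∀ v, v ≠ s → v ≠ t → ex F v = 0) →
    ex F s = r →
    ∃ ps : Fin r → List (V × V), (∀ i, IsPath G s t (ps i) ∧ ∀ e ∈ ps i, e ∈ F) ∧
      ∀ i j, i ≠ j → ∀ e, e ∈ ps i → e ∉ ps j := by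
  intro r
  induction r with
  | zero =>
    intro F _ _ _
    exact ⟨fun i => i.elim0, fun i => i.elim0, fun i => i.elim0⟩
  | succ r ih =>
    intro F hFG hcons hs
    have hnn : ∀ v, v ≠ t → 0 ≤ ex F v := by
      intro v hvt
      by_cases hvs : v = s
      · subst hvs; rw [hs]; positivity
      · rw [hcons v hvs hvt]
    obtain ⟨p, F'', hpne, hpF, hch, hhd, hlst, hsub, hdisj, hex1, hex2⟩ :=
      extract G t F.card F le_rfl hFG s hst hnn (by rw [hs]; push_cast; omega)
    have hFs : ex F'' s = r := by rw [hex2, hs]; push_cast; ring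
    obtain ⟨ps, hps, hdisj'⟩ := ih F'' (hsub.trans hFG)
      (fun v hv1 hv2 => (hex1 v hv1 hv2).trans (hcons v hv1 hv2)) hFs
    refine ⟨Fin.cons p ps, ?_, ?_⟩
    · intro i
      refine Fin.cases ?_ ?_ i
      · rw [Fin.cons_zero]
        exact ⟨⟨hpne, fun e he => hFG (hpF e he), hch, hhd, hlst⟩, hpF⟩
      · intro j
        rw [Fin.cons_succ]
        exact ⟨(hps j).1, fun e he => hsub ((hps j).2 e he)⟩
    · intro i j hij e hei hej
      rcases Fin.eq_zero_or_eq_succ i with rfl | ⟨i', rfl⟩ <;>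
        rcases Fin.eq_zero_or_eq_succ j with rfl | ⟨j', rfl⟩
      · exact hij rfl
      · rw [Fin.cons_zero] at hei
        rw [Fin.cons_succ] at hej
        exact hdisj e hei ((hps j').2 e hej)
      · rw [Fin.cons_succ] at hei
        rw [Fin.cons_zero] at hej
        exact hdisj e hej ((hps i').2 e hei)
      · rw [Fin.cons_succ] at hei hej
        exact hdisj' i' j' (fun h => hij (h ▸ rfl)) e hei hej

set_option linter.unusedSectionVars false in
lemma edp_le_card {G : Finset (V × V)} {s t : V} {r : ℕ} (h : EDP G s t r) : r ≤ G.card := by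
  obtain ⟨ps, hps, hdisj⟩ := h
  have hmem : ∀ i : Fin r, (ps i).head (hps i).1 ∈ ps i := fun i => List.head_mem _
  have := Finset.card_le_card_of_injOn (f := fun i : Fin r => (ps i).head (hps i).1)
    (s := Finset.univ) (t := G) (fun i _ => (hps i).2.1 _ (hmem i)) ?_
  · simpa using this
  · intro i _ j _ hij
    by_contra hne
    have hij' : (ps i).head (hps i).1 = (ps j).head (hps j).1 := hij
    exact hdisj i j hne _ (hmem i) (hij' ▸ hmem j)

lemma mincut_le_maxflow [Fintype V] (G : Finset (V × V)) (s t : V) (hst : s ≠ t)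
    {A0 : Finset V} (hA0 : IsMinCutS G {s} t A0) :
    cutVal G A0 ≤ maxFlow G s t := by
  classical
  set T : Set ℕ :=
    {r | ∃ F : Finset (V × V), F ⊆ G ∧ (∀ v, v ≠ s → v ≠ t → ex F v = 0) ∧ ex F s = r} with hT
  have hT0 : (0 : ℕ) ∈ T := ⟨∅, Finset.empty_subset G, fun v _ _ => by simp [ex], by simp [ex]⟩
  have hTbdd : BddAbove T := by
    refine ⟨G.card, fun r hr => ?_⟩
    obtain ⟨F, hFG, _, hs⟩ := hr
    have h1 : (F.filter fun e => e.1 = s).card ≤ F.card := Finset.card_filter_le _ _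
    have h2 : F.card ≤ G.card := Finset.card_le_card hFG
    unfold ex at hs
    omega
  obtain ⟨F, hFG, hcons, hexs⟩ := Nat.sSup_mem ⟨0, hT0⟩ hTbdd
  set r := sSup T with hr
  by_cases hreach : Relation.ReflTransGen (fun a b => ((a, b) ∈ G ∧ (a, b) ∉ F) ∨ (b, a) ∈ F) s t
  · exfalso
    obtain ⟨c, hcne, hch, hhd, hlst, hnd⟩ := exists_nodup_chain hreach
    obtain ⟨u, c', rfl⟩ := List.exists_cons_of_ne_nil hcne
    have hu : u = s := by simpa using hhd
    subst hu
    obtain ⟨F', hF'G, hexF'⟩ := aug G F t c' u F hFG hch hnd hlst (fun x y _ _ => Iff.rfl)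
    have hmem : r + 1 ∈ T := by
      refine ⟨F', hF'G, fun v hv1 hv2 => ?_, ?_⟩
      · rw [hexF' v, hcons v hv1 hv2]
        simp [Ne.symm hv1, Ne.symm hv2]
      · rw [hexF' u, hexs]
        simp [Ne.symm hst]
    have := le_csSup hTbdd hmem
    omega
  · set R : Finset V := Finset.univ.filter
      (fun v => Relation.ReflTransGen (fun a b => ((a, b) ∈ G ∧ (a, b) ∉ F) ∨ (b, a) ∈ F) s v)
      with hRdef
    have hmemR : ∀ v, v ∈ R ↔
        Relation.ReflTransGen (fun a b => ((a, b) ∈ G ∧ (a, b) ∉ F) ∨ (b, a) ∈ F) s v := by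
      intro v; simp [hRdef]
    have hsR : s ∈ R := (hmemR s).2 Relation.ReflTransGen.refl
    have htR : t ∉ R := fun h => hreach ((hmemR t).1 h)
    have hleave : (G.filter fun e => e.1 ∈ R ∧ e.2 ∉ R) = (F.filter fun e => e.1 ∈ R ∧ e.2 ∉ R) := by
      ext e
      simp only [Finset.mem_filter]
      constructor
      · rintro ⟨heG, h1, h2⟩
        refine ⟨?_, h1, h2⟩
        by_contra heF
        exact h2 ((hmemR e.2).2 (((hmemR e.1).1 h1).tail (Or.inl ⟨heG, heF⟩)))
      · rintro ⟨heF, h1, h2⟩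
        exact ⟨hFG heF, h1, h2⟩
    have henter : (F.filter fun e => e.1 ∉ R ∧ e.2 ∈ R) = ∅ := by
      rw [Finset.eq_empty_iff_forall_notMem]
      rintro e he
      rw [Finset.mem_filter] at he
      obtain ⟨heF, h1, h2⟩ := he
      exact h1 ((hmemR e.1).2 (((hmemR e.2).1 h2).tail (Or.inr heF)))
    have hcut := flow_cut hsR (fun v hv hvs => hcons v hvs (fun h => htR (h ▸ hv)))
      (F := F)
    rw [henter, hexs] at hcut
    have hcR : cutVal G R = r := by
      unfold cutVal
      rw [hleave]
      simpa using hcut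
    have h1 : cutVal G A0 ≤ cutVal G R :=
      hA0.2 R ⟨Finset.singleton_subset_iff.2 hsR, htR⟩
    obtain ⟨ps, hps, hd⟩ := edp_of_flow G s t hst r F hFG hcons hexs
    have hedp : EDP G s t r := ⟨ps, fun i => (hps i).1, hd⟩
    have hmf : r ≤ maxFlow G s t :=
      le_csSup ⟨G.card, fun m hm => edp_le_card hm⟩ hedp
    omega

lemma doubling (G : Finset (V × V)) (s t : V) (hout : ∀ w : V, w ≠ s → outDeg G w ≤ 2)
    (Ai : Finset V) (hs : s ∈ Ai) (ht : t ∉ Ai) :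
    cutVal G ((Ai ∪ outSet G Ai) \ {t}) ≤ 2 * cutVal G Ai := by
  classical
  have hX1 : ((G.filter fun e => e.1 ∈ (Ai ∪ outSet G Ai) \ {t} ∧ e.2 ∉ (Ai ∪ outSet G Ai) \ {t}).filter
      fun e => e.1 ∈ Ai) ⊆ ((G.filter fun e => e.1 ∈ Ai ∧ e.2 ∉ Ai).filter fun e => e.2 = t) := by
    intro e he
    simp only [Finset.mem_filter, Finset.mem_sdiff, Finset.mem_union, Finset.mem_singleton] at he ⊢
    obtain ⟨⟨heG, _, h2⟩, h3⟩ := he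
    have h2nA : e.2 ∉ Ai := by
      intro hA
      exact h2 ⟨Or.inl hA, fun h => ht (h ▸ hA)⟩
    have hos : e.2 ∈ outSet G Ai :=
      Finset.mem_image.2 ⟨e, Finset.mem_filter.2 ⟨heG, h3, h2nA⟩, rfl⟩
    have h2t : e.2 = t := by
      by_contra h
      exact h2 ⟨Or.inr hos, h⟩
    exact ⟨⟨heG, h3, h2nA⟩, h2t⟩
  have hX2 : ((G.filter fun e => e.1 ∈ (Ai ∪ outSet G Ai) \ {t} ∧ e.2 ∉ (Ai ∪ outSet G Ai) \ {t}).filter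
      fun e => ¬ e.1 ∈ Ai) ⊆ G.filter fun e => e.1 ∈ outSet G Ai \ {t} := by
    intro e he
    simp only [Finset.mem_filter, Finset.mem_sdiff, Finset.mem_union, Finset.mem_singleton] at he ⊢
    obtain ⟨⟨heG, ⟨h1a, h1b⟩, _⟩, h3⟩ := he
    rcases h1a with h | h
    · exact absurd h h3
    · exact ⟨heG, h, h1b⟩
  have hb2 : (G.filter fun e => e.1 ∈ outSet G Ai \ {t}).card ≤ 2 * (outSet G Ai \ {t}).card := by
    rw [card_filter_mem_fst]
    have hbd : ∀ v ∈ outSet G Ai \ {t}, (G.filter fun e => e.1 = v).card ≤ 2 := by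
      intro v hv
      rw [Finset.mem_sdiff] at hv
      obtain ⟨e', he', he2⟩ := Finset.mem_image.1 hv.1
      rw [Finset.mem_filter] at he'
      have hvs : v ≠ s := fun h => he'.2.2 (by rw [he2, h]; exact hs)
      exact hout v hvs
    calc ∑ v ∈ outSet G Ai \ {t}, (G.filter fun e => e.1 = v).card
        ≤ ∑ _v ∈ outSet G Ai \ {t}, 2 := Finset.sum_le_sum hbd
      _ = 2 * (outSet G Ai \ {t}).card := by rw [Finset.sum_const, smul_eq_mul]; ring
  have himg : outSet G Ai \ {t}
      = ((G.filter fun e => e.1 ∈ Ai ∧ e.2 ∉ Ai).filter fun e => ¬ e.2 = t).image Prod.snd := by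
    ext v
    simp only [Finset.mem_sdiff, Finset.mem_singleton, outSet, Finset.mem_image,
      Finset.mem_filter]
    constructor
    · rintro ⟨⟨e, he, rfl⟩, hvt⟩
      exact ⟨e, ⟨he, hvt⟩, rfl⟩
    · rintro ⟨e, ⟨he, het⟩, rfl⟩
      exact ⟨⟨e, he, rfl⟩, het⟩
  have hm : (outSet G Ai \ {t}).card
      ≤ ((G.filter fun e => e.1 ∈ Ai ∧ e.2 ∉ Ai).filter fun e => ¬ e.2 = t).card :=
    himg ▸ Finset.card_image_le
  have hEsplit := Finset.card_filter_add_card_filter_not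
    (s := G.filter fun e => e.1 ∈ Ai ∧ e.2 ∉ Ai) (p := fun e => e.2 = t)
  have hXsplit := Finset.card_filter_add_card_filter_not
    (s := G.filter fun e => e.1 ∈ (Ai ∪ outSet G Ai) \ {t} ∧ e.2 ∉ (Ai ∪ outSet G Ai) \ {t})
    (p := fun e => e.1 ∈ Ai)
  have h1 := Finset.card_le_card hX1
  have h2 := Finset.card_le_card hX2
  unfold cutVal
  omega

end S15


/-- in a graph where every vertex other than `s` has out-degree at most
`2`, the farthest min-cut sequence `C₁,…,C_{k+1}` (with `S₁ = {s}`,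
`C_i = FMC(S_i,t,G)`, `S_{i+1} = (A_i ∪ out(A_i)) ∖ {t}`) satisfies
`|C_{i+1}| ≤ 2|C_i|`, and hence `|C_{k+1}| ≤ 2^k·f` where `f = maxflow(s,t,G)`. -/
theorem stmt_15 {V : Type*} [Fintype V] [DecidableEq V]
    (G : Finset (V × V)) (s t : V) (hst : s ≠ t)
    (hout : ∀ w : V, w ≠ s → outDeg G w ≤ 2)
    (k f : ℕ) (hf : maxFlow G s t = f)
    (S A : Fin (k + 1) → Finset V)
    (hS0 : S 0 = {s})
    (hFMC : ∀ i, IsFMC G (S i) t (A i))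
    (hSsucc : ∀ i : Fin k,
      S i.succ = (A i.castSucc ∪ outSet G (A i.castSucc)) \ {t}) :
    (∀ i : Fin k, cutVal G (A i.succ) ≤ 2 * cutVal G (A i.castSucc)) ∧
    cutVal G (A (Fin.last k)) ≤ 2 ^ k * f := by
  classical
  have hsS : ∀ i, s ∈ S i := by
    intro i
    induction i using Fin.induction with
    | zero => rw [hS0]; exact Finset.mem_singleton_self s
    | succ i ih =>
      rw [hSsucc i, Finset.mem_sdiff, Finset.mem_union]
      exact ⟨Or.inl ((hFMC i.castSucc).1.1.1 ih), by simp [hst]⟩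
  have hsA : ∀ i, s ∈ A i := fun i => (hFMC i).1.1.1 (hsS i)
  have htA : ∀ i, t ∉ A i := fun i => (hFMC i).1.1.2
  have part1 : ∀ i : Fin k, cutVal G (A i.succ) ≤ 2 * cutVal G (A i.castSucc) := by
    intro i
    have hcut : IsCutS (S i.succ) t (S i.succ) := ⟨subset_rfl, by rw [hSsucc i]; simp⟩
    calc cutVal G (A i.succ) ≤ cutVal G (S i.succ) := (hFMC i.succ).1.2 _ hcut
      _ ≤ 2 * cutVal G (A i.castSucc) := by
          rw [hSsucc i]
          exact S15.doubling G s t hout _ (hsA _) (htA _)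
  refine ⟨part1, ?_⟩
  have main : ∀ i : Fin (k + 1), cutVal G (A i) ≤ 2 ^ (i : ℕ) * f := by
    intro i
    induction i using Fin.induction with
    | zero =>
      have h0 : IsMinCutS G {s} t (A 0) := hS0 ▸ (hFMC 0).1
      have hle := S15.mincut_le_maxflow G s t hst h0
      rw [hf] at hle
      simpa using hle
    | succ i ih =>
      calc cutVal G (A i.succ) ≤ 2 * cutVal G (A i.castSucc) := part1 i
        _ ≤ 2 * (2 ^ ((i.castSucc : Fin (k+1)) : ℕ) * f) := by omega
        _ = 2 ^ ((i.succ : Fin (k+1)) : ℕ) * f := by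
            rw [Fin.coe_castSucc, Fin.val_succ]; ring
  have hlast := main (Fin.last k)
  rwa [Fin.val_last] at hlast
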